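/- Let E be a directed graph and e ∈ E⁰ a vertex. If C₁ᵉ \ {e} contains exactly one element, then the inverse subsemigroup ⟨Cᵉ⟩ of G(E) generated by all cycles based at e is isomorphic to the bicyclic monoid. -/

import Mathlib

/-- A directed graph: vertices, edges, source and range maps. -/
structure DGraph where
  V : Type
  E : Type
  s : E → V
  r : E → V

namespace DGraph

variable {Q : DGraph}

/-- `pOk Q a l` : the list of edges `l` forms a valid path starting at vertex `a`. -/
def pOk (Q : DGraph) : Q.V → List Q.E → Prop
  | _, [] => True
  | a, e :: l => Q.s e = a ∧ pOk Q (Q.r e) l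

/-- The end vertex of an edge-list starting at `a`. -/
def pRng (Q : DGraph) (a : Q.V) (l : List Q.E) : Q.V :=
  l.foldl (fun _ e => Q.r e) a

theorem pRng_append (a : Q.V) (l₁ l₂ : List Q.E) :
    pRng Q a (l₁ ++ l₂) = pRng Q (pRng Q a l₁) l₂ :=
  List.foldl_append

theorem pOk_append {a : Q.V} {l₁ l₂ : List Q.E} (h₁ : pOk Q a l₁)
    (h₂ : pOk Q (pRng Q a l₁) l₂) : pOk Q a (l₁ ++ l₂) := by
  induction l₁ generalizing a with
  | nil => simpa [pRng] using h₂
  | cons e l ih =>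
      obtain ⟨he, hl⟩ := h₁
      exact ⟨he, ih hl h₂⟩

theorem pOk_drop {a : Q.V} {l₁ l₂ : List Q.E} (h : pOk Q a (l₁ ++ l₂)) :
    pOk Q (pRng Q a l₁) l₂ := by
  induction l₁ generalizing a with
  | nil => simpa [pRng] using h
  | cons e l ih => exact ih h.2

/-- A (finite, directed) path in the graph `Q`: a start vertex together with a
compatible list of edges.  Paths of length `0` are vertices. -/
structure GPath (Q : DGraph) where
  start : Q.V
  edges : List Q.E
  ok : pOk Q start edges

/-- The source `s(p)` of a path. -/
def GPath.src (p : GPath Q) : Q.V := p.start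

/-- The range `r(p)` of a path. -/
def GPath.rng (p : GPath Q) : Q.V := pRng Q p.start p.edges

/-- The length `|p|` of a path. -/
def GPath.length (p : GPath Q) : ℕ := p.edges.length

/-- The trivial (length zero) path at a vertex `a`. -/
def GPath.triv (Q : DGraph) (a : Q.V) : GPath Q := ⟨a, [], trivial⟩

/-- Concatenation of composable paths. -/
def GPath.comp (p q : GPath Q) (h : p.rng = q.start) : GPath Q :=
  ⟨p.start, p.edges ++ q.edges, pOk_append p.ok (by
    have hq := q.ok
    rw [← h] at hq
    exact hq)⟩

theorem GPath.comp_rng (p q : GPath Q) (h : p.rng = q.start) :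
    (p.comp q h).rng = q.rng := by
  show pRng Q p.start (p.edges ++ q.edges) = q.rng
  rw [pRng_append, show pRng Q p.start p.edges = q.start from h]
  rfl

theorem exists_sub {p q : GPath Q} (h1 : q.start = p.start)
    (h2 : p.edges <+: q.edges) :
    ∃ w : GPath Q, w.start = p.rng ∧ w.rng = q.rng ∧ p.edges ++ w.edges = q.edges := by
  obtain ⟨t, ht⟩ := h2
  have hok : pOk Q p.start (p.edges ++ t) := by rw [ht, ← h1]; exact q.ok
  refine ⟨⟨p.rng, t, pOk_drop hok⟩, rfl, ?_, ht⟩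
  show pRng Q (pRng Q p.start p.edges) t = pRng Q q.start q.edges
  rw [← pRng_append, ht, ← h1]

/-- If the path `q` decomposes as `p·w`, this is the path `w`. -/
noncomputable def subPath (p q : GPath Q) (h1 : q.start = p.start)
    (h2 : p.edges <+: q.edges) : GPath Q :=
  (exists_sub h1 h2).choose

theorem subPath_spec (p q : GPath Q) (h1 : q.start = p.start)
    (h2 : p.edges <+: q.edges) :
    (subPath p q h1 h2).start = p.rng ∧ (subPath p q h1 h2).rng = q.rng ∧
      p.edges ++ (subPath p q h1 h2).edges = q.edges :=
  (exists_sub h1 h2).choose_spec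

/-- The graph inverse semigroup `G(E)` over the graph `Q`: the element `0`
together with the elements `u v⁻¹` where `u, v` are paths with `r(u) = r(v)`. -/
inductive GIS (Q : DGraph) : Type
  | zero : GIS Q
  | elm (u v : GPath Q) (h : u.rng = v.rng) : GIS Q

instance : Zero (GIS Q) := ⟨GIS.zero⟩

-- Multiplication in the graph inverse semigroup:
-- `u₁v₁⁻¹ · u₂v₂⁻¹ = u₁wv₂⁻¹` if `u₂ = v₁w`, `u₁(v₂w)⁻¹` if `v₁ = u₂w`, `0` otherwise.
open Classical in
noncomputable def GIS.mul : GIS Q → GIS Q → GIS Q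
  | .zero, _ => .zero
  | _, .zero => .zero
  | .elm u₁ v₁ h₁, .elm u₂ v₂ h₂ =>
    if hA : u₂.start = v₁.start ∧ v₁.edges <+: u₂.edges then
      GIS.elm (u₁.comp (subPath v₁ u₂ hA.1 hA.2)
          (by rw [(subPath_spec v₁ u₂ hA.1 hA.2).1, h₁]))
        v₂
        (by rw [GPath.comp_rng, (subPath_spec v₁ u₂ hA.1 hA.2).2.1, h₂])
    else if hB : v₁.start = u₂.start ∧ u₂.edges <+: v₁.edges then
      GIS.elm u₁
        (v₂.comp (subPath u₂ v₁ hB.1 hB.2)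
          (by rw [(subPath_spec u₂ v₁ hB.1 hB.2).1, h₂]))
        (by rw [GPath.comp_rng, (subPath_spec u₂ v₁ hB.1 hB.2).2.1, h₁])
    else .zero

noncomputable instance : Mul (GIS Q) := ⟨GIS.mul⟩

/-- The inversion map of the graph inverse semigroup: `(uv⁻¹)⁻¹ = vu⁻¹`, `0⁻¹ = 0`. -/
def GIS.inv : GIS Q → GIS Q
  | .zero => .zero
  | .elm u v h => .elm v u h.symm

/-- The canonical identification of a path `u` with the element `u · r(u)⁻¹` of `G(E)`. -/
def toGIS (p : GPath Q) : GIS Q := GIS.elm p (GPath.triv Q p.rng) rfl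

end DGraph


namespace DGraph
variable {Q : DGraph}
/-- The inverse subsemigroup of `G(E)` generated by a subset `S`. -/
inductive genInv (S : Set (GIS Q)) : GIS Q → Prop
  | base {x : GIS Q} : x ∈ S → genInv S x
  | mul {x y : GIS Q} : genInv S x → genInv S y → genInv S (x * y)
  | inv {x : GIS Q} : genInv S x → genInv S (GIS.inv x)

/-- `Cᵉ`: the set of cycles based at `e` (including the trivial path `e`). -/
def Cyc (Q : DGraph) (e : Q.V) : Set (GPath Q) := {u | u.start = e ∧ u.rng = e}

/-- `C₁ᵉ`: cycles based at `e` whose non-trivial proper prefixes do not end at `e`. -/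
def Cyc1 (Q : DGraph) (e : Q.V) : Set (GPath Q) :=
  {u | u ∈ Cyc Q e ∧ ∀ v : GPath Q, v.start = u.start → v.edges <+: u.edges →
      v.edges ≠ [] → v.edges ≠ u.edges → v.rng ≠ e}
end DGraph


namespace DGraph
noncomputable instance {Q : DGraph} (S : Set (GIS Q)) :
    Mul {x : GIS Q // genInv S x} :=
  ⟨fun a b => ⟨a.1 * b.1, genInv.mul a.2 b.2⟩⟩
end DGraph


/-- The bicyclic monoid `⟨p, q | pq = 1⟩`, realized on `ℕ × ℕ` via `(m, n) ↦ qᵐpⁿ`. -/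
def Bic : Type := ℕ × ℕ

instance : Mul Bic :=
  ⟨fun a b => (a.1 + b.1 - min a.2 b.1, a.2 + b.2 - min a.2 b.1)⟩

open DGraph

namespace DGraph

variable {Q : DGraph} {e : Q.V} {u : GPath Q}

theorem GPath.ext' {p q : GPath Q} (h1 : p.start = q.start)
    (h2 : p.edges = q.edges) : p = q := by
  cases p; cases q; cases h1; cases h2; rfl

theorem elm_ext {a b a' b' : GPath Q} {h : a.rng = b.rng} {h' : a'.rng = b'.rng}
    (h1 : a = a') (h2 : b = b') : GIS.elm a b h = GIS.elm a' b' h' := by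
  cases h1; cases h2; rfl

theorem pOk_prefix {a : Q.V} {l₁ l₂ : List Q.E} (h : pOk Q a (l₁ ++ l₂)) :
    pOk Q a l₁ := by
  induction l₁ generalizing a with
  | nil => trivial
  | cons f l ih => exact ⟨h.1, ih h.2⟩

/-- Edge list of the `n`-fold power of a cycle. -/
def powE (u : GPath Q) : ℕ → List Q.E
  | 0 => []
  | n+1 => u.edges ++ powE u n

theorem pRng_u (hus : u.start = e) (hur : u.rng = e) : pRng Q e u.edges = e := by
  conv_lhs => rw [← hus]
  exact hur

theorem pRng_powE (hus : u.start = e) (hur : u.rng = e) :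
    ∀ n, pRng Q e (powE u n) = e
  | 0 => rfl
  | n+1 => by
      show pRng Q e (u.edges ++ powE u n) = e
      rw [pRng_append, pRng_u hus hur]
      exact pRng_powE hus hur n

theorem pOk_powE (hus : u.start = e) (hur : u.rng = e) :
    ∀ n, pOk Q e (powE u n)
  | 0 => trivial
  | n+1 => by
      refine pOk_append ?_ ?_
      · rw [← hus]; exact u.ok
      · rw [pRng_u hus hur]; exact pOk_powE hus hur n

/-- The `n`-fold power of a cycle, as a path. -/
def powP (hus : u.start = e) (hur : u.rng = e) (n : ℕ) : GPath Q :=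
  ⟨e, powE u n, pOk_powE hus hur n⟩

theorem powP_rng (hus : u.start = e) (hur : u.rng = e) (n : ℕ) :
    (powP hus hur n).rng = e := pRng_powE hus hur n

theorem powE_add (u : GPath Q) (m n : ℕ) :
    powE u (m + n) = powE u m ++ powE u n := by
  induction m with
  | zero => simp [powE]
  | succ m ih =>
      have h1 : m + 1 + n = (m + n) + 1 := by omega
      rw [h1]
      show u.edges ++ powE u (m + n) = (u.edges ++ powE u m) ++ powE u n
      rw [ih, List.append_assoc]

theorem length_powE (u : GPath Q) (n : ℕ) :
    (powE u n).length = n * u.edges.length := by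
  induction n with
  | zero => simp [powE]
  | succ n ih =>
      show (u.edges ++ powE u n).length = _
      rw [List.length_append, ih]; ring

theorem powE_prefix (u : GPath Q) {m n : ℕ} (h : m ≤ n) :
    powE u m <+: powE u n :=
  ⟨powE u (n - m), by rw [← powE_add, Nat.add_sub_cancel' h]⟩

theorem powE_prefix_le (hL : u.edges ≠ []) {m n : ℕ}
    (h : powE u m <+: powE u n) : m ≤ n := by
  have := h.length_le
  rw [length_powE, length_powE] at this
  have hL' : 0 < u.edges.length := List.length_pos_iff.mpr hL
  exact Nat.le_of_mul_le_mul_right this hL'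

/-- Every cycle based at `e` is a power of the unique element of `C₁ᵉ \ {e}`. -/
theorem cyc_pow (hu : Cyc1 Q e \ {GPath.triv Q e} = {u}) :
    ∀ N (w : GPath Q), w.edges.length ≤ N → w ∈ Cyc Q e →
      ∃ n, w.edges = powE u n := by
  intro N
  induction N with
  | zero =>
      intro w hlen _
      exact ⟨0, List.length_eq_zero_iff.mp (Nat.le_zero.mp hlen)⟩
  | succ N ih =>
      intro w hlen hc
      by_cases h0 : w.edges = []
      · exact ⟨0, h0⟩
      · classical
        have hwok : pOk Q e w.edges := by rw [← hc.1]; exact w.ok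
        have hwr : pRng Q e w.edges = e := by
          conv_lhs => rw [← hc.1]
          exact hc.2
        have hP : ∃ k, 0 < k ∧ k ≤ w.edges.length ∧
            pRng Q e (w.edges.take k) = e := by
          refine ⟨w.edges.length, List.length_pos_iff.mpr h0, le_rfl, ?_⟩
          rw [List.take_length]; exact hwr
        set k := Nat.find hP with hk
        obtain ⟨hk0, hkle, hkr⟩ := Nat.find_spec hP
        have hokp : pOk Q e (w.edges.take k) := by
          apply pOk_prefix (l₂ := w.edges.drop k)
          rw [List.take_append_drop]; exact hwok
        set p : GPath Q := ⟨e, w.edges.take k, hokp⟩ with hp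
        have hpC1 : p ∈ Cyc1 Q e := by
          refine ⟨⟨rfl, hkr⟩, ?_⟩
          intro v hv1 hv2 hv3 hv4
          have hjk : v.edges.length ≤ k := by
            have := hv2.length_le
            exact (by simpa [hp, min_eq_left hkle] using le_trans this (le_rfl) : v.edges.length ≤ k ∧ _).1
          have hjlt : v.edges.length < k := by
            rcases lt_or_eq_of_le hjk with h | h
            · exact h
            · exfalso; apply hv4
              have h1 : v.edges = (w.edges.take k).take v.edges.length :=
                List.prefix_iff_eq_take.mp hv2
              have h2 : (w.edges.take k).take v.edges.length = w.edges.take k := by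
                rw [h, List.take_take, min_self]
              exact h1.trans h2
          have hvtake : v.edges = w.edges.take v.edges.length := by
            have h1 : v.edges = (w.edges.take k).take v.edges.length :=
              List.prefix_iff_eq_take.mp hv2
            have h2 : (w.edges.take k).take v.edges.length
                = w.edges.take v.edges.length := by
              rw [List.take_take, min_eq_left (le_of_lt hjlt)]
            exact h1.trans h2
          have := Nat.find_min hP hjlt
          push_neg at this
          have hj0 : 0 < v.edges.length := List.length_pos_iff.mpr hv3
          have hjle : v.edges.length ≤ w.edges.length :=
            le_trans (le_of_lt hjlt) hkle
          have hne := this hj0 hjle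
          show v.rng ≠ e
          have h2 : v.rng = pRng Q e (w.edges.take v.edges.length) := by
            show pRng Q v.start v.edges = pRng Q e (w.edges.take v.edges.length)
            rw [hv1]
            show pRng Q e v.edges = pRng Q e (w.edges.take v.edges.length)
            exact congrArg (pRng Q e) hvtake
          rw [h2]; exact hne
        have hpne : p ≠ GPath.triv Q e := by
          intro hcon
          have h1 : p.edges = (GPath.triv Q e).edges := by rw [hcon]
          have h2 : w.edges.take k = [] := h1
          have h3 := congrArg List.length h2
          rw [List.length_take] at h3
          have hwlen : 0 < w.edges.length := List.length_pos_iff.mpr h0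
          simp only [List.length_nil] at h3
          omega
        have hpu : p = u := by
          have : p ∈ Cyc1 Q e \ {GPath.triv Q e} := ⟨hpC1, hpne⟩
          rw [hu] at this; exact this
        have hue : u.edges = w.edges.take k := by rw [← hpu]
        have hdec : w.edges = u.edges ++ w.edges.drop k := by
          rw [hue, List.take_append_drop]
        have hus' : u.start = e := by rw [← hpu]
        have hur' : u.rng = e := by rw [← hpu]; exact hkr
        have hokd : pOk Q e (w.edges.drop k) := by
          have h2 := pOk_drop (a := e) (l₁ := u.edges) (l₂ := w.edges.drop k)
            (by rw [← hdec]; exact hwok)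
          rwa [pRng_u hus' hur'] at h2
        set w' : GPath Q := ⟨e, w.edges.drop k, hokd⟩ with hw'
        have hw'c : w' ∈ Cyc Q e := by
          refine ⟨rfl, ?_⟩
          show pRng Q e (w.edges.drop k) = e
          have h3 : pRng Q e (u.edges ++ w.edges.drop k) = e := by
            rw [← hdec]; exact hwr
          rwa [pRng_append, pRng_u hus' hur'] at h3
        have hlen' : w'.edges.length ≤ N := by
          show (w.edges.drop k).length ≤ N
          rw [List.length_drop]; omega
        obtain ⟨n, hn⟩ := ih w' hlen' hw'c
        refine ⟨n + 1, ?_⟩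
        rw [hdec]
        have : w.edges.drop k = powE u n := hn
        rw [this]
        rfl

@[simp] theorem powP_start (hus : u.start = e) (hur : u.rng = e) (n : ℕ) :
    (powP hus hur n).start = e := rfl

@[simp] theorem powP_edges (hus : u.start = e) (hur : u.rng = e) (n : ℕ) :
    (powP hus hur n).edges = powE u n := rfl

/-- The element `uᵐ (uⁿ)⁻¹` of the graph inverse semigroup. -/
def powElm (hus : u.start = e) (hur : u.rng = e) (m n : ℕ) : GIS Q :=
  GIS.elm (powP hus hur m) (powP hus hur n)
    (by rw [powP_rng, powP_rng])

theorem subPath_powP (hus : u.start = e) (hur : u.rng = e) {m n : ℕ}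
    (hmn : m ≤ n) (h1 : (powP hus hur n).start = (powP hus hur m).start)
    (h2 : (powP hus hur m).edges <+: (powP hus hur n).edges) :
    subPath (powP hus hur m) (powP hus hur n) h1 h2 = powP hus hur (n - m) := by
  obtain ⟨hs, hr, he⟩ := subPath_spec (powP hus hur m) (powP hus hur n) h1 h2
  refine GPath.ext' ?_ ?_
  · rw [hs]; exact powP_rng hus hur m
  · have h3 : powE u m ++ (subPath (powP hus hur m) (powP hus hur n) h1 h2).edges
        = powE u m ++ powE u (n - m) := by
      have h4 : powE u n = powE u m ++ powE u (n - m) := by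
        rw [← powE_add, Nat.add_sub_cancel' hmn]
      rw [← h4]; exact he
    exact List.append_cancel_left h3

theorem powElm_mul (hus : u.start = e) (hur : u.rng = e) (hL : u.edges ≠ [])
    (m n k l : ℕ) :
    powElm hus hur m n * powElm hus hur k l
      = powElm hus hur (m + k - min n k) (n + l - min n k) := by
  show GIS.mul (GIS.elm (powP hus hur m) (powP hus hur n) _)
      (GIS.elm (powP hus hur k) (powP hus hur l) _) = _
  rcases le_or_gt n k with hnk | hnk
  · have hA : (powP hus hur k).start = (powP hus hur n).start ∧
        (powP hus hur n).edges <+: (powP hus hur k).edges :=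
      ⟨rfl, powE_prefix u hnk⟩
    simp only [GIS.mul]
    rw [dif_pos hA]
    refine elm_ext ?_ ?_
    · refine GPath.ext' rfl ?_
      show powE u m ++ (subPath _ _ hA.1 hA.2).edges = powE u (m + k - min n k)
      rw [subPath_powP hus hur hnk]
      show powE u m ++ powE u (k - n) = powE u (m + k - min n k)
      rw [← powE_add]
      congr 1
      omega
    · refine GPath.ext' rfl ?_
      show powE u l = powE u (n + l - min n k)
      congr 1
      omega
  · have hA : ¬((powP hus hur k).start = (powP hus hur n).start ∧
        (powP hus hur n).edges <+: (powP hus hur k).edges) := by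
      rintro ⟨-, hpre⟩
      exact absurd (powE_prefix_le hL hpre) (not_le.mpr hnk)
    have hB : (powP hus hur n).start = (powP hus hur k).start ∧
        (powP hus hur k).edges <+: (powP hus hur n).edges :=
      ⟨rfl, powE_prefix u (le_of_lt hnk)⟩
    simp only [GIS.mul]
    rw [dif_neg hA, dif_pos hB]
    refine elm_ext ?_ ?_
    · refine GPath.ext' rfl ?_
      show powE u m = powE u (m + k - min n k)
      congr 1
      omega
    · refine GPath.ext' rfl ?_
      show powE u l ++ (subPath _ _ hB.1 hB.2).edges = powE u (n + l - min n k)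
      rw [subPath_powP hus hur (le_of_lt hnk)]
      show powE u l ++ powE u (n - k) = powE u (n + l - min n k)
      rw [← powE_add]
      congr 1
      omega

theorem toGIS_powP (hus : u.start = e) (hur : u.rng = e) (n : ℕ) :
    toGIS (powP hus hur n) = powElm hus hur n 0 :=
  elm_ext rfl (GPath.ext' (powP_rng hus hur n) rfl)

theorem powElm_mem (hus : u.start = e) (hur : u.rng = e) (hL : u.edges ≠ [])
    (m n : ℕ) : genInv (toGIS '' Cyc Q e) (powElm hus hur m n) := by
  have hmem : ∀ j : ℕ, genInv (toGIS '' Cyc Q e) (powElm hus hur j 0) := by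
    intro j
    refine genInv.base ⟨powP hus hur j, ⟨rfl, powP_rng hus hur j⟩, ?_⟩
    exact toGIS_powP hus hur j
  have hinv : genInv (toGIS '' Cyc Q e) (powElm hus hur 0 n) := by
    have := genInv.inv (hmem n)
    have heq : GIS.inv (powElm hus hur n 0) = powElm hus hur 0 n :=
      elm_ext rfl rfl
    rwa [heq] at this
  have := genInv.mul (hmem m) hinv
  have heq : powElm hus hur m 0 * powElm hus hur 0 n = powElm hus hur m n := by
    rw [powElm_mul hus hur hL]
    simp
  rwa [heq] at this

theorem genInv_pow (hus : u.start = e) (hur : u.rng = e) (hL : u.edges ≠ [])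
    (hu : Cyc1 Q e \ {GPath.triv Q e} = {u}) {x : GIS Q}
    (hx : genInv (toGIS '' Cyc Q e) x) :
    ∃ m n, x = powElm hus hur m n := by
  induction hx with
  | base h =>
      obtain ⟨w, hw, rfl⟩ := h
      obtain ⟨n0, hn0⟩ := cyc_pow hu w.edges.length w le_rfl hw
      have hw' : w = powP hus hur n0 := GPath.ext' hw.1 hn0
      exact ⟨n0, 0, by rw [hw', toGIS_powP]⟩
  | mul _ _ ihx ihy =>
      obtain ⟨m, n, rfl⟩ := ihx
      obtain ⟨k, l, rfl⟩ := ihy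
      exact ⟨_, _, powElm_mul hus hur hL m n k l⟩
  | inv _ ihx =>
      obtain ⟨m, n, rfl⟩ := ihx
      exact ⟨n, m, elm_ext rfl rfl⟩

/-- Read off the bicyclic coordinates of an element of the subsemigroup. -/
def toBic (L : ℕ) : GIS Q → Bic
  | .zero => (0, 0)
  | .elm v w _ => (v.length / L, w.length / L)

theorem toBic_powElm (hus : u.start = e) (hur : u.rng = e) (hL : u.edges ≠ [])
    (m n : ℕ) : toBic u.edges.length (powElm hus hur m n) = (m, n) := by
  have hL' : 0 < u.edges.length := List.length_pos_iff.mpr hL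
  show ((powP hus hur m).length / u.edges.length,
      (powP hus hur n).length / u.edges.length) = (m, n)
  have h1 : (powP hus hur m).length = m * u.edges.length := length_powE u m
  have h2 : (powP hus hur n).length = n * u.edges.length := length_powE u n
  rw [h1, h2, Nat.mul_div_cancel m hL', Nat.mul_div_cancel n hL']

end DGraph

theorem stmt4 (Q : DGraph) (e : Q.V)
    (h : ∃ u : GPath Q, Cyc1 Q e \ {GPath.triv Q e} = {u}) :
    ∃ f : {x : GIS Q // genInv (toGIS '' Cyc Q e) x} ≃ Bic,
      ∀ a b, f (a * b) = f a * f b := by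
  obtain ⟨u, hu⟩ := h
  have huC : u ∈ Cyc1 Q e \ {GPath.triv Q e} := by rw [hu]; exact rfl
  have hus : u.start = e := huC.1.1.1
  have hur : u.rng = e := huC.1.1.2
  have hL : u.edges ≠ [] := by
    intro hnil
    exact huC.2 (GPath.ext' hus hnil)
  let g : {x : GIS Q // genInv (toGIS '' Cyc Q e) x} → Bic :=
    fun x => toBic u.edges.length x.1
  have key : ∀ x : {x : GIS Q // genInv (toGIS '' Cyc Q e) x},
      ∃ m n, x.1 = powElm hus hur m n := fun x => genInv_pow hus hur hL hu x.2
  have hbij : Function.Bijective g := by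
    constructor
    · intro a b hab
      obtain ⟨m, n, ha⟩ := key a
      obtain ⟨k, l, hb⟩ := key b
      have h1 : toBic u.edges.length (powElm hus hur m n)
          = toBic u.edges.length (powElm hus hur k l) := by
        rw [← ha, ← hb]; exact hab
      rw [toBic_powElm hus hur hL, toBic_powElm hus hur hL] at h1
      obtain ⟨h2, h3⟩ := Prod.ext_iff.mp h1
      apply Subtype.ext
      rw [ha, hb]
      simp only at h2 h3
      rw [h2, h3]
    · intro b
      refine ⟨⟨powElm hus hur b.1 b.2, powElm_mem hus hur hL b.1 b.2⟩, ?_⟩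
      show toBic u.edges.length (powElm hus hur b.1 b.2) = b
      rw [toBic_powElm hus hur hL]
      rfl
  refine ⟨Equiv.ofBijective g hbij, ?_⟩
  intro a b
  simp only [Equiv.ofBijective_apply]
  obtain ⟨m, n, ha⟩ := key a
  obtain ⟨k, l, hb⟩ := key b
  show toBic u.edges.length (a.1 * b.1)
      = toBic u.edges.length a.1 * toBic u.edges.length b.1
  rw [ha, hb, powElm_mul hus hur hL, toBic_powElm hus hur hL,
    toBic_powElm hus hur hL, toBic_powElm hus hur hL]
  rfl
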